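/- Let A be a C*-algebra, H a Hilbert A-module, and φ : H → A a bounded module map. Then for any finite subset F ⊆ H and ε > 0 there exists x ∈ H with ‖x‖ ≤ ‖φ‖ such that ‖φ(ξ) − ⟨x, ξ⟩‖ < ε for all ξ ∈ F. Moreover, if H is countably generated, there is a sequence xₙ ∈ H with ‖xₙ‖ ≤ ‖φ‖ and ‖φ(ξ) − ⟨xₙ, ξ⟩‖ → 0 for every ξ ∈ H. -/

import Mathlib

open scoped RightActions
open Filter Topology

noncomputable section

/-- The December 2024 Mathlib notion `CStarModule` (right `A`-action via `Aᵐᵒᵖ`), restated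
because Mathlib's `CStarModule` now uses a left action with another convention. -/
class RightCStarModule (A : outParam <| Type*) (E : Type*) [NonUnitalSemiring A] [StarRing A]
    [Module ℂ A] [AddCommGroup E] [Module ℂ E] [PartialOrder A] [SMul Aᵐᵒᵖ E] [Norm A] [Norm E]
    extends Inner A E where
  inner_add_right {x} {y} {z} : inner x (y + z) = inner x y + inner x z
  inner_self_nonneg {x} : 0 ≤ inner x x
  inner_self {x} : inner x x = 0 ↔ x = 0
  inner_op_smul_right {a : A} {x y : E} : inner x (y <• a) = inner x y * a
  inner_smul_right_complex {z : ℂ} {x} {y} : inner x (z • y) = z • inner x y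
  star_inner x y : star (inner x y) = inner y x
  norm_eq_sqrt_norm_inner_self x : ‖x‖ = √‖inner x x‖

set_option linter.unusedSectionVars false
set_option maxHeartbeats 1000000

noncomputable section

namespace RightCStarModule

variable {A E : Type*} [NonUnitalCStarAlgebra A] [PartialOrder A] [StarOrderedRing A]
  [NormedAddCommGroup E] [NormedSpace ℂ E] [SMul Aᵐᵒᵖ E] [RightCStarModule A E]

local notation "⟪" x ", " y "⟫" => inner A x y

attribute [simp] RightCStarModule.inner_add_right RightCStarModule.star_inner
  RightCStarModule.inner_op_smul_right RightCStarModule.inner_smul_right_complex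

@[simp]
lemma inner_add_left {x y z : E} : ⟪x + y, z⟫ = ⟪x, z⟫ + ⟪y, z⟫ := by
  rw [← star_star (r := ⟪x + y, z⟫)]
  simp only [inner_add_right, star_add, star_inner]

@[simp]
lemma inner_op_smul_left {a : A} {x y : E} : ⟪x <• a, y⟫ = star a * ⟪x, y⟫ := by
  rw [← star_inner y, inner_op_smul_right, star_mul, star_inner]

@[simp]
lemma inner_smul_left_complex {z : ℂ} {x y : E} : ⟪z • x, y⟫ = star z • ⟪x, y⟫ := by
  rw [← star_inner y, inner_smul_right_complex, star_smul, star_inner]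

@[simp]
lemma inner_smul_left_real {z : ℝ} {x y : E} : ⟪z • x, y⟫ = z • ⟪x, y⟫ := by
  have h₁ : z • x = (z : ℂ) • x := by simp
  rw [h₁, inner_smul_left_complex]
  simp

@[simp]
lemma inner_smul_right_real {z : ℝ} {x y : E} : ⟪x, z • y⟫ = z • ⟪x, y⟫ := by
  have h₁ : z • y = (z : ℂ) • y := by simp
  rw [h₁, inner_smul_right_complex]
  simp

/-- The inner product as a sesquilinear map. -/
def innerₛₗ : E →ₗ⋆[ℂ] E →ₗ[ℂ] A where
  toFun x := { toFun := fun y => ⟪x, y⟫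
               map_add' := fun z y => by simp
               map_smul' := fun z y => by simp }
  map_add' z y := by ext; simp
  map_smul' z y := by ext; simp

lemma innerₛₗ_apply {x y : E} : innerₛₗ x y = ⟪x, y⟫ := rfl

@[simp] lemma inner_zero_right {x : E} : ⟪x, 0⟫ = 0 := by simp [← innerₛₗ_apply]
@[simp] lemma inner_zero_left {x : E} : ⟪0, x⟫ = 0 := by simp [← innerₛₗ_apply]
@[simp] lemma inner_neg_right {x y : E} : ⟪x, -y⟫ = -⟪x, y⟫ := by simp [← innerₛₗ_apply]
@[simp] lemma inner_neg_left {x y : E} : ⟪-x, y⟫ = -⟪x, y⟫ := by simp [← innerₛₗ_apply]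
@[simp] lemma inner_sub_right {x y z : E} : ⟪x, y - z⟫ = ⟪x, y⟫ - ⟪x, z⟫ := by
  simp [← innerₛₗ_apply]
@[simp] lemma inner_sub_left {x y z : E} : ⟪x - y, z⟫ = ⟪x, z⟫ - ⟪y, z⟫ := by
  simp [← innerₛₗ_apply]

@[simp]
lemma inner_sum_right {ι : Type*} {s : Finset ι} {x : E} {y : ι → E} :
    ⟪x, ∑ i ∈ s, y i⟫ = ∑ i ∈ s, ⟪x, y i⟫ :=
  map_sum (innerₛₗ x) ..

@[simp]
lemma inner_sum_left {ι : Type*} {s : Finset ι} {x : ι → E} {y : E} :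
    ⟪∑ i ∈ s, x i, y⟫ = ∑ i ∈ s, ⟪x i, y⟫ :=
  map_sum (innerₛₗ.flip y) ..

@[simp]
lemma isSelfAdjoint_inner_self {x : E} : IsSelfAdjoint ⟪x, x⟫ := star_inner _ _

lemma norm_sq_eq {x : E} : ‖x‖ ^ 2 = ‖⟪x, x⟫‖ := by
  rw [norm_eq_sqrt_norm_inner_self (A := A) x, Real.sq_sqrt (norm_nonneg _)]

lemma inner_swap_mul_inner_le {x y : E} : ⟪y, x⟫ * ⟪x, y⟫ ≤ ‖x‖ ^ 2 • ⟪y, y⟫ := by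
  rcases eq_or_ne x 0 with h | h
  · subst h; simp
  have hr : (0 : ℝ) < ‖x‖ ^ 2 := by
    have : 0 < ‖x‖ := norm_pos_iff.mpr h
    positivity
  have hxx : ‖⟪x, x⟫‖ = ‖x‖ ^ 2 := norm_sq_eq.symm
  have h0 : (0 : A) ≤ ⟪x <• ⟪x, y⟫ - (‖x‖ ^ 2) • y, x <• ⟪x, y⟫ - (‖x‖ ^ 2) • y⟫ :=
    inner_self_nonneg
  have hexp : ⟪x <• ⟪x, y⟫ - (‖x‖ ^ 2) • y, x <• ⟪x, y⟫ - (‖x‖ ^ 2) • y⟫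
      = ⟪y, x⟫ * ⟪x, x⟫ * ⟪x, y⟫ - (‖x‖ ^ 2) • (⟪y, x⟫ * ⟪x, y⟫)
        - (‖x‖ ^ 2) • (⟪y, x⟫ * ⟪x, y⟫) + (‖x‖ ^ 2) • ((‖x‖ ^ 2) • ⟪y, y⟫) := by
    simp only [inner_sub_left, inner_sub_right, inner_op_smul_left, inner_op_smul_right,
      inner_smul_left_real, inner_smul_right_real, star_inner, mul_assoc, mul_smul_comm,
      smul_mul_assoc, sub_mul, mul_sub, smul_sub]
    abel
  have hC : ⟪y, x⟫ * ⟪x, x⟫ * ⟪x, y⟫ ≤ (‖x‖ ^ 2) • (⟪y, x⟫ * ⟪x, y⟫) := by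
    calc ⟪y, x⟫ * ⟪x, x⟫ * ⟪x, y⟫ = star ⟪x, y⟫ * ⟪x, x⟫ * ⟪x, y⟫ := by rw [star_inner]
      _ ≤ ‖⟪x, x⟫‖ • (star ⟪x, y⟫ * ⟪x, y⟫) :=
          CStarAlgebra.star_left_conjugate_le_norm_smul isSelfAdjoint_inner_self
      _ = (‖x‖ ^ 2) • (⟪y, x⟫ * ⟪x, y⟫) := by rw [hxx, star_inner]
  have h2 : (‖x‖ ^ 2) • (0 : A) ≤ (‖x‖ ^ 2) • ((‖x‖ ^ 2) • ⟪y, y⟫ - ⟪y, x⟫ * ⟪x, y⟫) := by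
    rw [smul_sub, smul_zero]
    calc (0 : A) ≤ _ := h0
      _ = _ := hexp
      _ ≤ (‖x‖ ^ 2) • (⟪y, x⟫ * ⟪x, y⟫) - (‖x‖ ^ 2) • (⟪y, x⟫ * ⟪x, y⟫)
          - (‖x‖ ^ 2) • (⟪y, x⟫ * ⟪x, y⟫) + (‖x‖ ^ 2) • ((‖x‖ ^ 2) • ⟪y, y⟫) := by gcongr
      _ = _ := by abel
  exact sub_nonneg.mp ((smul_le_smul_iff_of_pos_left hr).mp h2)

variable (E) in
lemma norm_inner_le {x y : E} : ‖⟪x, y⟫‖ ≤ ‖x‖ * ‖y‖ := by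
  have := calc ‖⟪x, y⟫‖ ^ 2 = ‖⟪y, x⟫ * ⟪x, y⟫‖ := by
                rw [← star_inner x y, CStarRing.norm_star_mul_self, pow_two]
    _ ≤ ‖‖x‖ ^ 2 • ⟪y, y⟫‖ := by
                refine CStarAlgebra.norm_le_norm_of_nonneg_of_le ?_ inner_swap_mul_inner_le
                rw [← star_inner x y]
                exact star_mul_self_nonneg _
    _ = ‖x‖ ^ 2 * ‖⟪y, y⟫‖ := by
                rw [norm_smul, Real.norm_eq_abs, abs_of_nonneg (by positivity)]
    _ = ‖x‖ ^ 2 * ‖y‖ ^ 2 := by rw [norm_sq_eq (x := y)]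
    _ = (‖x‖ * ‖y‖) ^ 2 := by rw [mul_pow]
  exact (pow_le_pow_iff_left₀ (norm_nonneg _) (by positivity) (by norm_num)).mp this

/-- The inner product as a continuous sesquilinear map. -/
noncomputable def innerSL : E →L⋆[ℂ] E →L[ℂ] A :=
  LinearMap.mkContinuous₂ (innerₛₗ : E →ₗ⋆[ℂ] E →ₗ[ℂ] A) 1 <| fun x y => by
    rw [innerₛₗ_apply, one_mul]
    exact norm_inner_le E

lemma innerSL_apply {x y : E} : innerSL x y = ⟪x, y⟫ := rfl

lemma continuous_inner : Continuous (fun x : E × E => ⟪x.1, x.2⟫) := by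
  simp_rw [← innerSL_apply]
  fun_prop

end RightCStarModule

namespace Stmt18

variable {A E : Type*} [NonUnitalCStarAlgebra A] [PartialOrder A] [StarOrderedRing A]
  [NormedAddCommGroup E] [NormedSpace ℂ E] [SMul Aᵐᵒᵖ E] [RightCStarModule A E]

local notation "⟪" x ", " y "⟫" => inner (𝕜 := A) x y

lemma ext_left {x y : E} (h : ∀ z : E, ⟪z, x⟫ = ⟪z, y⟫) : x = y := by
  have h2 : ⟪x - y, x - y⟫ = 0 := by
    rw [RightCStarModule.inner_sub_right, h (x - y), sub_self]
  exact sub_eq_zero.mp (RightCStarModule.inner_self.mp h2)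

lemma op_smul_add (x : E) (a b : A) : x <• (a + b) = x <• a + x <• b := by
  refine ext_left fun z => ?_
  rw [RightCStarModule.inner_add_right, RightCStarModule.inner_op_smul_right,
    RightCStarModule.inner_op_smul_right, RightCStarModule.inner_op_smul_right, mul_add]

lemma op_smul_csmul (x : E) (c : ℂ) (a : A) : x <• (c • a) = c • (x <• a) := by
  refine ext_left fun z => ?_
  rw [RightCStarModule.inner_op_smul_right, RightCStarModule.inner_smul_right_complex,
    RightCStarModule.inner_op_smul_right]
  exact mul_smul_comm c _ a

lemma norm_op_smul_le (x : E) (a : A) : ‖x <• a‖ ≤ ‖x‖ * ‖a‖ := by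
  have h : ‖x <• a‖ ^ 2 ≤ (‖x‖ * ‖a‖) ^ 2 := by
    rw [RightCStarModule.norm_sq_eq]
    calc ‖⟪x <• a, x <• a⟫‖ = ‖star a * ⟪x, x⟫ * a‖ := by
          simp [mul_assoc]
      _ ≤ ‖star a * ⟪x, x⟫‖ * ‖a‖ := norm_mul_le _ _
      _ ≤ ‖star a‖ * ‖⟪x, x⟫‖ * ‖a‖ := by gcongr; exact norm_mul_le _ _
      _ = ‖a‖ * ‖x‖ ^ 2 * ‖a‖ := by rw [norm_star, RightCStarModule.norm_sq_eq]
      _ = (‖x‖ * ‖a‖) ^ 2 := by ring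
  exact (pow_le_pow_iff_left₀ (norm_nonneg _) (by positivity) (by norm_num)).mp h

variable (A E) in
/-- The subring of `(E →L[ℂ] E) × (E →L[ℂ] E)ᵐᵒᵖ` consisting of pairs `(T, T*)` of
adjointable operators. -/
def adjsr : Subring ((E →L[ℂ] E) × (E →L[ℂ] E)ᵐᵒᵖ) where
  carrier := {p | ∀ x y : E, ⟪p.2.unop x, y⟫ = ⟪x, p.1 y⟫}
  zero_mem' := by intro x y; simp
  one_mem' := by intro x y; simp
  add_mem' := by
    intro p q hp hq x y
    have : (p + q).2.unop = p.2.unop + q.2.unop := rfl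
    simp only [this, Prod.fst_add, ContinuousLinearMap.add_apply, RightCStarModule.inner_add_left,
      RightCStarModule.inner_add_right, hp x y, hq x y]
  neg_mem' := by
    intro p hp x y
    have : (-p).2.unop = -p.2.unop := rfl
    simp only [this, Prod.fst_neg, ContinuousLinearMap.neg_apply, RightCStarModule.inner_neg_left,
      RightCStarModule.inner_neg_right, hp x y]
  mul_mem' := by
    intro p q hp hq x y
    have h2 : (p * q).2.unop = q.2.unop.comp p.2.unop := rfl
    have h1 : (p * q).1 = p.1.comp q.1 := rfl
    rw [h2, h1]
    simp only [ContinuousLinearMap.comp_apply]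
    rw [hq, hp]

variable (A E) in
/-- The ⋆-algebra of adjointable operators on a Hilbert C⋆-module. -/
def Adj : Type _ := ↥(adjsr A E)

namespace Adj

instance : Ring (Adj A E) := inferInstanceAs (Ring ↥(adjsr A E))

variable {T S : Adj A E}

/-- The underlying operator. -/
def op (T : Adj A E) : E →L[ℂ] E := T.1.1

/-- The adjoint operator. -/
def adj (T : Adj A E) : E →L[ℂ] E := T.1.2.unop

lemma adj_inner (T : Adj A E) (x y : E) : ⟪T.adj x, y⟫ = ⟪x, T.op y⟫ := T.2 x y

lemma op_inner (T : Adj A E) (x y : E) : ⟪T.op x, y⟫ = ⟪x, T.adj y⟫ := by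
  calc ⟪T.op x, y⟫ = star ⟪y, T.op x⟫ := (RightCStarModule.star_inner _ _).symm
    _ = star ⟪T.adj y, x⟫ := by rw [T.adj_inner y x]
    _ = ⟪x, T.adj y⟫ := by rw [RightCStarModule.star_inner]

lemma ext' (h : T.op = S.op) : T = S := by
  have hadj : T.adj = S.adj := by
    ext x
    refine ext_left fun z => ?_
    have h1 := congrArg star (T.adj_inner x z)
    have h2 := congrArg star (S.adj_inner x z)
    simp only [RightCStarModule.star_inner] at h1 h2
    rw [h1, h2, h]
  exact Subtype.ext (Prod.ext h (MulOpposite.unop_injective hadj))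

@[simp] lemma op_add : (T + S).op = T.op + S.op := rfl
@[simp] lemma op_mul : (T * S).op = T.op.comp S.op := rfl
@[simp] lemma op_one : (1 : Adj A E).op = ContinuousLinearMap.id ℂ E := rfl
@[simp] lemma op_zero : (0 : Adj A E).op = 0 := rfl
@[simp] lemma op_sub : (T - S).op = T.op - S.op := rfl
@[simp] lemma op_sum {ι : Type*} (s : Finset ι) (f : ι → Adj A E) :
    (∑ i ∈ s, f i).op = ∑ i ∈ s, (f i).op := by
  classical
  induction s using Finset.induction with
  | empty => simp
  | insert a s' h ih => simp [Finset.sum_insert h, ih]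

instance : Star (Adj A E) where
  star T := ⟨(T.adj, .op T.op), fun x y => T.op_inner x y⟩

@[simp] lemma op_star : (star T).op = T.adj := rfl
@[simp] lemma adj_star : (star T).adj = T.op := rfl

instance : StarRing (Adj A E) where
  star_involutive T := ext' rfl
  star_mul T S := ext' rfl
  star_add T S := ext' rfl

instance : SMul ℂ (Adj A E) where
  smul c T := ⟨(c • T.op, .op ((starRingEnd ℂ c) • T.adj)), by
    intro x y
    show ⟪(starRingEnd ℂ c • T.adj) x, y⟫ = ⟪x, (c • T.op) y⟫
    simp only [ContinuousLinearMap.smul_apply, RightCStarModule.inner_smul_left_complex,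
      RightCStarModule.inner_smul_right_complex, starRingEnd_apply, star_star, T.adj_inner x y]⟩

@[simp] lemma op_smul (c : ℂ) : (c • T).op = c • T.op := rfl
@[simp] lemma adj_smul (c : ℂ) : (c • T).adj = (starRingEnd ℂ c) • T.adj := rfl

instance : Module ℂ (Adj A E) where
  one_smul T := ext' (by simp)
  mul_smul c₁ c₂ T := ext' (by simp [mul_smul])
  smul_zero c := ext' (by simp)
  smul_add c T S := ext' (by simp)
  add_smul c₁ c₂ T := ext' (by simp [add_smul])
  zero_smul T := ext' (by simp)

variable (A E) in
/-- First component as a ring hom. -/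
def fstHom : Adj A E →+* (E →L[ℂ] E) := (RingHom.fst _ _).comp (adjsr A E).subtype

lemma fstHom_apply (T : Adj A E) : fstHom A E T = T.op := rfl

lemma fstHom_injective : Function.Injective (fstHom A E) := fun _ _ h => ext' h

instance : NormedRing (Adj A E) := NormedRing.induced _ _ (fstHom A E) fstHom_injective

lemma norm_def (T : Adj A E) : ‖T‖ = ‖T.op‖ := rfl

lemma norm_op_apply_le (T : Adj A E) (x : E) : ‖T.op x‖ ≤ ‖T‖ * ‖x‖ := T.op.le_opNorm x

instance : Algebra ℂ (Adj A E) :=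
  Algebra.ofModule
    (fun c T S => ext' (by
      show (c • T.op).comp S.op = c • (T.op.comp S.op)
      ext z; simp))
    (fun c T S => ext' (by
      show T.op.comp (c • S.op) = c • (T.op.comp S.op)
      ext z; simp))

instance : NormedAlgebra ℂ (Adj A E) :=
  NormedAlgebra.induced ℂ _ _ (AlgHom.mk' (fstHom A E) (fun _ _ => rfl))

instance : StarModule ℂ (Adj A E) where
  star_smul c T := ext' rfl

lemma norm_adj_le (T : Adj A E) : ‖T.adj‖ ≤ ‖T.op‖ := by
  refine T.adj.opNorm_le_bound (norm_nonneg _) fun x => ?_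
  by_cases hz : ‖T.adj x‖ = 0
  · rw [hz]; positivity
  · have hpos : 0 < ‖T.adj x‖ := (norm_nonneg _).lt_of_ne (Ne.symm hz)
    have h : ‖T.adj x‖ ^ 2 ≤ (‖T.op‖ * ‖x‖) * ‖T.adj x‖ := by
      rw [RightCStarModule.norm_sq_eq (A := A), T.adj_inner]
      calc ‖⟪x, T.op (T.adj x)⟫‖ ≤ ‖x‖ * ‖T.op (T.adj x)‖ := RightCStarModule.norm_inner_le E
        _ ≤ ‖x‖ * (‖T.op‖ * ‖T.adj x‖) := by gcongr; exact T.op.le_opNorm _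
        _ = (‖T.op‖ * ‖x‖) * ‖T.adj x‖ := by ring
    nlinarith [h]

lemma norm_adj (T : Adj A E) : ‖T.adj‖ = ‖T.op‖ := by
  refine le_antisymm (norm_adj_le T) ?_
  simpa using norm_adj_le (star T)

instance : CStarRing (Adj A E) where
  norm_mul_self_le T := by
    have hS : (0 : ℝ) ≤ ‖star T * T‖ := norm_nonneg _
    have hT : ‖T‖ ≤ Real.sqrt ‖star T * T‖ := by
      refine T.op.opNorm_le_bound (Real.sqrt_nonneg _) fun x => ?_
      have h : ‖T.op x‖ ^ 2 ≤ (Real.sqrt ‖star T * T‖ * ‖x‖) ^ 2 := by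
        rw [RightCStarModule.norm_sq_eq (A := A), T.op_inner]
        calc ‖⟪x, T.adj (T.op x)⟫‖ = ‖⟪x, (star T * T).op x⟫‖ := rfl
          _ ≤ ‖x‖ * ‖(star T * T).op x‖ := RightCStarModule.norm_inner_le E
          _ ≤ ‖x‖ * (‖star T * T‖ * ‖x‖) := by gcongr; exact norm_op_apply_le _ _
          _ = (Real.sqrt ‖star T * T‖ * ‖x‖) ^ 2 := by
              rw [mul_pow, Real.sq_sqrt hS]; ring
      exact (pow_le_pow_iff_left₀ (norm_nonneg _) (by positivity) (by norm_num)).mp h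
    calc ‖T‖ * ‖T‖ ≤ Real.sqrt ‖star T * T‖ * Real.sqrt ‖star T * T‖ := by
          exact mul_le_mul hT hT (norm_nonneg _) (Real.sqrt_nonneg _)
      _ = ‖star T * T‖ := Real.mul_self_sqrt hS

@[simp] lemma adj_sub (T S : Adj A E) : (T - S).adj = T.adj - S.adj := rfl

lemma dist_eq (T S : Adj A E) : dist T S = dist T.op S.op := by
  rw [dist_eq_norm, dist_eq_norm, norm_def, op_sub]

variable [CompleteSpace E]

instance : CompleteSpace (Adj A E) := by
  refine Metric.complete_of_cauchySeq_tendsto fun u hu => ?_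
  set v : ℕ → E →L[ℂ] E := fun n => (u n).op with hv_def
  set w : ℕ → E →L[ℂ] E := fun n => (u n).adj with hw_def
  have hv : CauchySeq v := by
    rw [Metric.cauchySeq_iff] at hu ⊢
    intro ε hε
    obtain ⟨N, hN⟩ := hu ε hε
    exact ⟨N, fun m hm n hn => by rw [← dist_eq]; exact hN m hm n hn⟩
  have hw : CauchySeq w := by
    rw [Metric.cauchySeq_iff] at hu ⊢
    intro ε hε
    obtain ⟨N, hN⟩ := hu ε hε
    refine ⟨N, fun m hm n hn => ?_⟩
    have : dist (w m) (w n) = dist (u m) (u n) := by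
      rw [dist_eq_norm, dist_eq_norm (u m), norm_def, ← adj_sub, norm_adj, op_sub]
    rw [this]; exact hN m hm n hn
  obtain ⟨S, hS⟩ := cauchySeq_tendsto_of_complete hv
  obtain ⟨W, hW⟩ := cauchySeq_tendsto_of_complete hw
  have happly : ∀ (T : E →L[ℂ] E) (q : ℕ → E →L[ℂ] E) (x : E), Tendsto q atTop (𝓝 T) →
      Tendsto (fun n => q n x) atTop (𝓝 (T x)) := fun T q x hq =>
    ((ContinuousLinearMap.apply ℂ E x).continuous.tendsto T).comp hq
  have hinner1 : ∀ x y : E, Continuous (fun z : E => ⟪z, y⟫) := fun x y =>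
    RightCStarModule.continuous_inner.comp (continuous_id.prodMk continuous_const)
  have hinner2 : ∀ x y : E, Continuous (fun z : E => ⟪x, z⟫) := fun x y =>
    RightCStarModule.continuous_inner.comp (continuous_const.prodMk continuous_id)
  have hprop : ∀ x y : E, ⟪W x, y⟫ = ⟪x, S y⟫ := by
    intro x y
    have h1 : Tendsto (fun n => ⟪w n x, y⟫) atTop (𝓝 ⟪W x, y⟫) :=
      ((hinner1 x y).tendsto _).comp (happly W w x hW)
    have h2 : Tendsto (fun n => ⟪x, v n y⟫) atTop (𝓝 ⟪x, S y⟫) :=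
      ((hinner2 x y).tendsto _).comp (happly S v y hS)
    have heq : (fun n => ⟪w n x, y⟫) = fun n => ⟪x, v n y⟫ := by
      funext n; exact (u n).adj_inner x y
    rw [heq] at h1
    exact tendsto_nhds_unique h1 h2
  refine ⟨⟨(S, .op W), fun x y => hprop x y⟩, ?_⟩
  rw [Metric.tendsto_atTop] at hS
  refine Metric.tendsto_atTop.mpr ?_
  intro ε hε
  obtain ⟨N, hN⟩ := hS ε hε
  exact ⟨N, fun n hn => (dist_eq _ _).trans_lt (hN n hn)⟩

instance : CStarAlgebra (Adj A E) := { }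

end Adj

section RankOne

variable (A) in
/-- The rank one operator `ζ ↦ ξ ⟪ξ, ζ⟫` as a continuous linear map. -/
def rankOneCLM (ξ : E) : E →L[ℂ] E :=
  LinearMap.mkContinuous
    { toFun := fun ζ => ξ <• ⟪ξ, ζ⟫
      map_add' := fun ζ₁ ζ₂ => by
        show ξ <• ⟪ξ, ζ₁ + ζ₂⟫ = ξ <• ⟪ξ, ζ₁⟫ + ξ <• ⟪ξ, ζ₂⟫
        rw [RightCStarModule.inner_add_right, op_smul_add]
      map_smul' := fun c ζ => by
        show ξ <• ⟪ξ, c • ζ⟫ = c • (ξ <• ⟪ξ, ζ⟫)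
        rw [RightCStarModule.inner_smul_right_complex]
        exact op_smul_csmul ξ c _ }
    (‖ξ‖ ^ 2)
    (fun ζ => by
      calc ‖ξ <• ⟪ξ, ζ⟫‖ ≤ ‖ξ‖ * ‖⟪ξ, ζ⟫‖ := norm_op_smul_le _ _
        _ ≤ ‖ξ‖ * (‖ξ‖ * ‖ζ‖) := by gcongr; exact RightCStarModule.norm_inner_le E
        _ = ‖ξ‖ ^ 2 * ‖ζ‖ := by ring)

lemma rankOneCLM_apply (ξ ζ : E) : rankOneCLM A ξ ζ = ξ <• ⟪ξ, ζ⟫ := rfl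

variable (A) in
/-- The rank one operator as an adjointable operator. -/
def rankOne (ξ : E) : Adj A E :=
  ⟨(rankOneCLM A ξ, .op (rankOneCLM A ξ)), fun x y => by
    show ⟪ξ <• ⟪ξ, x⟫, y⟫ = ⟪x, ξ <• ⟪ξ, y⟫⟫
    rw [RightCStarModule.inner_op_smul_left, RightCStarModule.inner_op_smul_right,
      RightCStarModule.star_inner]⟩

lemma rankOne_op_apply (ξ ζ : E) : (rankOne A ξ).op ζ = ξ <• ⟪ξ, ζ⟫ := rfl

lemma isSelfAdjoint_rankOne (ξ : E) : IsSelfAdjoint (rankOne A ξ) := Adj.ext' rfl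

variable (A) in
/-- The sum of the rank one operators over a finite set. -/
def kOp (F : Finset E) : Adj A E := ∑ ξ ∈ F, rankOne A ξ

lemma isSelfAdjoint_kOp (F : Finset E) : IsSelfAdjoint (kOp A F) := by
  unfold kOp IsSelfAdjoint
  rw [star_sum]
  exact Finset.sum_congr rfl fun ξ _ => isSelfAdjoint_rankOne ξ

lemma kOp_apply (F : Finset E) (ζ : E) : (kOp A F).op ζ = ∑ ξ ∈ F, ξ <• ⟪ξ, ζ⟫ := by
  unfold kOp
  rw [Adj.op_sum]
  simp [ContinuousLinearMap.sum_apply, rankOne_op_apply]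

lemma inner_kOp (F : Finset E) (ζ ζ' : E) :
    ⟪ζ', (kOp A F).op ζ⟫ = ∑ ξ ∈ F, ⟪ζ', ξ⟫ * ⟪ξ, ζ⟫ := by
  rw [kOp_apply]
  simp

lemma inner_kOp_nonneg (F : Finset E) (ζ : E) : 0 ≤ ⟪ζ, (kOp A F).op ζ⟫ := by
  rw [inner_kOp]
  refine Finset.sum_nonneg fun ξ _ => ?_
  rw [← RightCStarModule.star_inner ξ ζ]
  exact star_mul_self_nonneg _

/-- Finite Cauchy-Schwarz type estimate. -/
lemma inner_sum_self_le {ι : Type*} (s : Finset ι) (u : ι → E) :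
    ⟪∑ i ∈ s, u i, ∑ i ∈ s, u i⟫ ≤ s.card • ∑ i ∈ s, ⟪u i, u i⟫ := by
  classical
  have h0 : (0 : A) ≤ ∑ i ∈ s, ∑ j ∈ s, ⟪u i - u j, u i - u j⟫ :=
    Finset.sum_nonneg fun i _ => Finset.sum_nonneg fun j _ => RightCStarModule.inner_self_nonneg
  have hexp : ∑ i ∈ s, ∑ j ∈ s, ⟪u i - u j, u i - u j⟫
      = (s.card • ∑ i ∈ s, ⟪u i, u i⟫ + s.card • ∑ i ∈ s, ⟪u i, u i⟫)
        - (⟪∑ i ∈ s, u i, ∑ i ∈ s, u i⟫ + ⟪∑ i ∈ s, u i, ∑ i ∈ s, u i⟫) := by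
    have e1 : ∀ i j : ι, ⟪u i - u j, u i - u j⟫
        = (⟪u i, u i⟫ + ⟪u j, u j⟫) - (⟪u i, u j⟫ + ⟪u j, u i⟫) := by
      intro i j
      simp only [RightCStarModule.inner_sub_left, RightCStarModule.inner_sub_right]
      abel
    rw [Finset.sum_congr rfl fun i _ => Finset.sum_congr rfl fun j _ => e1 i j]
    rw [Finset.sum_congr rfl fun i (_ : i ∈ s) => Finset.sum_sub_distrib _ _,
      Finset.sum_sub_distrib]
    congr 1
    · rw [Finset.sum_congr rfl fun i (_ : i ∈ s) => Finset.sum_add_distrib,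
        Finset.sum_add_distrib]
      congr 1
      · rw [Finset.sum_congr rfl fun i (_ : i ∈ s) => Finset.sum_const _, ← Finset.smul_sum]
      · rw [Finset.sum_comm,
          Finset.sum_congr rfl fun i (_ : i ∈ s) => Finset.sum_const _, ← Finset.smul_sum]
    · rw [Finset.sum_congr rfl fun i (_ : i ∈ s) => Finset.sum_add_distrib,
        Finset.sum_add_distrib]
      congr 1
      · rw [RightCStarModule.inner_sum_left]
        exact Finset.sum_congr rfl fun i _ => (RightCStarModule.inner_sum_right).symm
      · rw [Finset.sum_comm, RightCStarModule.inner_sum_left]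
        exact Finset.sum_congr rfl fun i _ => (RightCStarModule.inner_sum_right).symm
  rw [hexp, sub_nonneg] at h0
  have h2 : (2 : ℝ) • ⟪∑ i ∈ s, u i, ∑ i ∈ s, u i⟫
      ≤ (2 : ℝ) • (s.card • ∑ i ∈ s, ⟪u i, u i⟫) := by
    rw [two_smul, two_smul]
    exact h0
  exact (smul_le_smul_iff_of_pos_left (by norm_num : (0:ℝ) < 2)).mp h2

/-- Numerical bound for `kOp`. -/
def kBound (F : Finset E) : ℝ := (F.card : ℝ) * ∑ ξ ∈ F, ‖ξ‖ ^ 2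

lemma kBound_nonneg (F : Finset E) : 0 ≤ kBound F := by
  unfold kBound
  positivity

lemma kOp_sq_le (F : Finset E) (ζ : E) :
    ⟪(kOp A F).op ζ, (kOp A F).op ζ⟫ ≤ kBound F • ⟪ζ, (kOp A F).op ζ⟫ := by
  classical
  set w := (kOp A F).op ζ with hw
  have hw2 : w = ∑ ξ ∈ F, ξ <• ⟪ξ, ζ⟫ := kOp_apply F ζ
  set C : ℝ := ∑ ξ ∈ F, ‖ξ‖ ^ 2 with hC
  have hC0 : 0 ≤ C := by positivity
  have step1 : ⟪w, w⟫ ≤ F.card • ∑ ξ ∈ F, ⟪ξ <• ⟪ξ, ζ⟫, ξ <• ⟪ξ, ζ⟫⟫ := by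
    rw [hw2]; exact inner_sum_self_le F _
  have step2 : ∑ ξ ∈ F, ⟪ξ <• ⟪ξ, ζ⟫, ξ <• ⟪ξ, ζ⟫⟫ ≤ C • ⟪ζ, w⟫ := by
    have hterm : ∀ ξ ∈ F, ⟪ξ <• ⟪ξ, ζ⟫, ξ <• ⟪ξ, ζ⟫⟫ ≤ C • (star ⟪ξ, ζ⟫ * ⟪ξ, ζ⟫) := by
      intro ξ hξ
      have h1 : ⟪ξ <• ⟪ξ, ζ⟫, ξ <• ⟪ξ, ζ⟫⟫ = star ⟪ξ, ζ⟫ * ⟪ξ, ξ⟫ * ⟪ξ, ζ⟫ := by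
        rw [RightCStarModule.inner_op_smul_left, RightCStarModule.inner_op_smul_right, mul_assoc]
      rw [h1]
      calc star ⟪ξ, ζ⟫ * ⟪ξ, ξ⟫ * ⟪ξ, ζ⟫
          ≤ ‖⟪ξ, ξ⟫‖ • (star ⟪ξ, ζ⟫ * ⟪ξ, ζ⟫) :=
            CStarAlgebra.star_left_conjugate_le_norm_smul RightCStarModule.isSelfAdjoint_inner_self
        _ = (‖ξ‖ ^ 2) • (star ⟪ξ, ζ⟫ * ⟪ξ, ζ⟫) := by rw [RightCStarModule.norm_sq_eq]
        _ ≤ C • (star ⟪ξ, ζ⟫ * ⟪ξ, ζ⟫) := by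
            refine smul_le_smul_of_nonneg_right ?_ (star_mul_self_nonneg _)
            exact Finset.single_le_sum (f := fun ξ : E => ‖ξ‖ ^ 2)
              (fun i _ => by positivity) hξ
    calc ∑ ξ ∈ F, ⟪ξ <• ⟪ξ, ζ⟫, ξ <• ⟪ξ, ζ⟫⟫
        ≤ ∑ ξ ∈ F, C • (star ⟪ξ, ζ⟫ * ⟪ξ, ζ⟫) := Finset.sum_le_sum hterm
      _ = C • ⟪ζ, w⟫ := by
          rw [hw, inner_kOp, Finset.smul_sum]
          exact Finset.sum_congr rfl fun ξ _ => by rw [RightCStarModule.star_inner]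
  calc ⟪w, w⟫ ≤ F.card • ∑ ξ ∈ F, ⟪ξ <• ⟪ξ, ζ⟫, ξ <• ⟪ξ, ζ⟫⟫ := step1
    _ = (F.card : ℝ) • ∑ ξ ∈ F, ⟪ξ <• ⟪ξ, ζ⟫, ξ <• ⟪ξ, ζ⟫⟫ :=
        (Nat.cast_smul_eq_nsmul ℝ _ _).symm
    _ ≤ (F.card : ℝ) • (C • ⟪ζ, w⟫) := smul_le_smul_of_nonneg_left step2 (by positivity)
    _ = kBound F • ⟪ζ, w⟫ := by rw [smul_smul]; rfl

end RankOne

section Spectrum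

variable [CompleteSpace E] [Nontrivial E]

instance : Nontrivial (Adj A E) := by
  obtain ⟨x, hx⟩ := exists_ne (0 : E)
  refine ⟨1, 0, fun h => hx ?_⟩
  have := congrArg (fun T : Adj A E => T.op x) h
  simpa using this

lemma op_real_smul (r : ℝ) (T : Adj A E) : (r • T).op = r • T.op := rfl

lemma norm_smul_one_sub_kOp (F : Finset E) :
    ‖(kBound F / 2) • (1 : Adj A E) - kOp A F‖ ≤ kBound F / 2 := by
  set r : ℝ := kBound F / 2 with hr_def
  have hr : 0 ≤ r := by
    rw [hr_def]
    exact div_nonneg (kBound_nonneg F) (by norm_num)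
  set a : Adj A E := r • (1 : Adj A E) - kOp A F with ha_def
  show ‖a‖ ≤ r
  rw [Adj.norm_def]
  refine ContinuousLinearMap.opNorm_le_bound _ hr fun ζ => ?_
  have hop : a.op ζ = r • ζ - (kOp A F).op ζ := by
    rw [ha_def, Adj.op_sub, op_real_smul, Adj.op_one]
    rfl
  set v : E := r • ζ - (kOp A F).op ζ with hv_def
  rw [hop]
  have hsym : ⟪(kOp A F).op ζ, ζ⟫ = ⟪ζ, (kOp A F).op ζ⟫ := by
    have h1 := (kOp A F).op_inner ζ ζ
    have h2 : (kOp A F).adj = (kOp A F).op := by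
      have := isSelfAdjoint_kOp (A := A) F
      unfold IsSelfAdjoint at this
      exact congrArg Adj.op this ▸ rfl
    rw [h2] at h1
    exact h1
  have hinner : ⟪v, v⟫ ≤ (r ^ 2) • ⟪ζ, ζ⟫ := by
    have hexp : ⟪v, v⟫ = r • (r • ⟪ζ, ζ⟫) - ((2 * r) • ⟪ζ, (kOp A F).op ζ⟫
        - ⟪(kOp A F).op ζ, (kOp A F).op ζ⟫) := by
      rw [hv_def]
      simp only [RightCStarModule.inner_sub_left, RightCStarModule.inner_sub_right,
        RightCStarModule.inner_smul_left_real, RightCStarModule.inner_smul_right_real, hsym]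
      module
    have h2 : (2 * r) • ⟪ζ, (kOp A F).op ζ⟫ - ⟪(kOp A F).op ζ, (kOp A F).op ζ⟫ ≥ 0 := by
      rw [ge_iff_le, sub_nonneg]
      have : (2 : ℝ) * r = kBound F := by rw [hr_def]; ring
      rw [this]
      exact kOp_sq_le F ζ
    calc ⟪v, v⟫ ≤ r • (r • ⟪ζ, ζ⟫) - 0 := by
          rw [hexp]; exact sub_le_sub_left h2 _
      _ = (r ^ 2) • ⟪ζ, ζ⟫ := by rw [sub_zero, smul_smul, sq]
  have hnorm : ‖v‖ ^ 2 ≤ (r * ‖ζ‖) ^ 2 := by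
    rw [RightCStarModule.norm_sq_eq (A := A)]
    calc ‖⟪v, v⟫‖ ≤ ‖(r ^ 2) • ⟪ζ, ζ⟫‖ :=
          CStarAlgebra.norm_le_norm_of_nonneg_of_le RightCStarModule.inner_self_nonneg hinner
      _ = r ^ 2 * ‖⟪ζ, ζ⟫‖ := by
          rw [norm_smul, Real.norm_eq_abs, abs_of_nonneg (by positivity)]
      _ = r ^ 2 * ‖ζ‖ ^ 2 := by rw [RightCStarModule.norm_sq_eq (A := A)]
      _ = (r * ‖ζ‖) ^ 2 := by ring
  exact (pow_le_pow_iff_left₀ (norm_nonneg _) (by positivity) (by norm_num)).mp hnorm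

lemma spectrum_kOp_nonneg (F : Finset E) : ∀ μ ∈ spectrum ℝ (kOp A F), 0 ≤ μ := by
  intro μ hμ
  set r : ℝ := kBound F / 2 with hr_def
  have halg : algebraMap ℝ (Adj A E) r = r • (1 : Adj A E) :=
    Algebra.algebraMap_eq_smul_one r
  have h1 : r - μ ∈ spectrum ℝ (algebraMap ℝ (Adj A E) r - kOp A F) := by
    rw [← spectrum.singleton_sub_eq]
    exact Set.sub_mem_sub rfl hμ
  have h2 : ‖r - μ‖ ≤ r := by
    calc ‖r - μ‖ ≤ ‖algebraMap ℝ (Adj A E) r - kOp A F‖ := spectrum.norm_le_norm_of_mem h1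
      _ ≤ r := by rw [halg]; exact norm_smul_one_sub_kOp F
  rw [Real.norm_eq_abs] at h2
  have := (abs_le.mp h2).2
  linarith

end Spectrum

section Main

variable [CompleteSpace E] [Nontrivial E]

lemma adj_eq_op_of_isSelfAdjoint {T : Adj A E} (hT : IsSelfAdjoint T) : T.adj = T.op := by
  have h : (star T).op = T.op := congrArg Adj.op hT
  exact h

lemma isSelfAdjoint_op_inner {T : Adj A E} (hT : IsSelfAdjoint T) (x y : E) :
    ⟪T.op x, y⟫ = ⟪x, T.op y⟫ := by
  rw [T.op_inner, adj_eq_op_of_isSelfAdjoint hT]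

lemma op_map_op_smul (T : Adj A E) (x : E) (a : A) : T.op (x <• a) = (T.op x) <• a := by
  refine ext_left fun z => ?_
  calc ⟪z, T.op (x <• a)⟫ = ⟪T.adj z, x <• a⟫ := (T.adj_inner z _).symm
    _ = ⟪T.adj z, x⟫ * a := RightCStarModule.inner_op_smul_right
    _ = ⟪z, T.op x⟫ * a := by rw [T.adj_inner]
    _ = ⟪z, (T.op x) <• a⟫ := RightCStarModule.inner_op_smul_right.symm

lemma main_approx (φ : E →L[ℂ] A) (hφ : ∀ (x : E) (a : A), φ (x <• a) = φ x * a)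
    (F : Finset E) {t : ℝ} (ht : 0 < t) :
    ∃ x : E, ‖x‖ ≤ ‖φ‖ ∧ ∀ ξ ∈ F, ‖φ ξ - ⟪x, ξ⟫‖ ≤ ‖φ‖ * (Real.sqrt t / 2) := by
  classical
  have hk : IsSelfAdjoint (kOp A F) := isSelfAdjoint_kOp F
  have hspec : ∀ μ ∈ spectrum ℝ (kOp A F), 0 ≤ μ := spectrum_kOp_nonneg F
  have hts : ∀ s ∈ spectrum ℝ (kOp A F), t + s ≠ 0 := fun s hs => by
    have := hspec s hs; positivity
  have hcont_inv : ContinuousOn (fun s : ℝ => (t + s)⁻¹) (spectrum ℝ (kOp A F)) :=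
    ContinuousOn.inv₀ (continuous_const.add continuous_id).continuousOn hts
  have hcont_e : ContinuousOn (fun s : ℝ => (t + s)⁻¹ * s) (spectrum ℝ (kOp A F)) :=
    hcont_inv.mul continuousOn_id
  have hcont_d : ContinuousOn (fun s : ℝ => t * (t + s)⁻¹) (spectrum ℝ (kOp A F)) :=
    continuousOn_const.mul hcont_inv
  set c : Adj A E := cfc (fun s : ℝ => (t + s)⁻¹) (kOp A F) with hc_def
  set e : Adj A E := cfc (fun s : ℝ => (t + s)⁻¹ * s) (kOp A F) with he_def
  set d : Adj A E := cfc (fun s : ℝ => t * (t + s)⁻¹) (kOp A F) with hd_def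
  have hd_sa : IsSelfAdjoint d := cfc_predicate _ _
  have hce : e = c * kOp A F := by
    rw [he_def, cfc_mul (fun s : ℝ => (t + s)⁻¹) (fun s : ℝ => s) (kOp A F) hcont_inv
      continuous_id.continuousOn, cfc_id' ℝ (kOp A F) hk]
  have hde : e + d = 1 := by
    rw [he_def, hd_def, ← cfc_add (kOp A F) _ _ hcont_e hcont_d]
    rw [cfc_congr (g := fun _ : ℝ => 1) (fun s hs => by
      have h1 : 0 ≤ s := hspec s hs
      have h2 : t + s ≠ 0 := hts s hs
      field_simp
      ring)]
    exact cfc_const_one ℝ (kOp A F) hk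
  have hnorm_e : ‖e‖ ≤ 1 := by
    rw [he_def]
    refine norm_cfc_le (by norm_num) fun s hs => ?_
    have h1 : 0 ≤ s := hspec s hs
    have hp : (0:ℝ) < t + s := by linarith
    rw [Real.norm_eq_abs, abs_of_nonneg (mul_nonneg (inv_nonneg.mpr hp.le) h1)]
    have hstep : (t + s)⁻¹ * s ≤ (t + s)⁻¹ * (t + s) := by
      gcongr
      linarith
    rwa [inv_mul_cancel₀ hp.ne'] at hstep
  have hdkd : d * kOp A F * d
      = cfc (fun s : ℝ => (t * (t + s)⁻¹) * s * (t * (t + s)⁻¹)) (kOp A F) := by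
    rw [cfc_mul (fun s : ℝ => t * (t + s)⁻¹ * s) (fun s : ℝ => t * (t + s)⁻¹) (kOp A F)
        (hcont_d.mul continuous_id.continuousOn) hcont_d,
      cfc_mul (fun s : ℝ => t * (t + s)⁻¹) (fun s : ℝ => s) (kOp A F) hcont_d
        continuous_id.continuousOn, cfc_id' ℝ (kOp A F) hk]
  have hnorm_dkd : ‖d * kOp A F * d‖ ≤ t / 4 := by
    rw [hdkd]
    refine norm_cfc_le (by positivity) fun s hs => ?_
    have h1 : 0 ≤ s := hspec s hs
    have hp : (0:ℝ) < t + s := by linarith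
    rw [Real.norm_eq_abs, abs_of_nonneg (mul_nonneg (mul_nonneg
      (mul_nonneg ht.le (inv_nonneg.mpr hp.le)) h1)
      (mul_nonneg ht.le (inv_nonneg.mpr hp.le)))]
    have heq : (t * (t + s)⁻¹) * s * (t * (t + s)⁻¹) = t^2 * s / (t + s)^2 := by
      field_simp
    rw [heq, div_le_div_iff₀ (by positivity) (by norm_num : (0:ℝ) < 4)]
    nlinarith [sq_nonneg (t - s)]
  set x : E := ∑ ξ ∈ F, ξ <• star (φ (c.op ξ)) with hx_def
  have hinner_x : ∀ ζ : E, ⟪x, ζ⟫ = φ (e.op ζ) := by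
    intro ζ
    rw [hx_def, RightCStarModule.inner_sum_left]
    rw [Finset.sum_congr rfl (fun ξ (_ : ξ ∈ F) => by
      rw [RightCStarModule.inner_op_smul_left, star_star, ← hφ])]
    rw [Finset.sum_congr rfl (fun ξ (_ : ξ ∈ F) =>
      congrArg φ (op_map_op_smul c ξ ⟪ξ, ζ⟫).symm)]
    rw [← map_sum, ← map_sum, ← kOp_apply, hce]
    rfl
  have hx_norm : ‖x‖ ≤ ‖φ‖ := by
    by_cases hx0 : ‖x‖ = 0
    · rw [hx0]; exact norm_nonneg φ
    · have hxpos : 0 < ‖x‖ := (norm_nonneg x).lt_of_ne (Ne.symm hx0)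
      have h : ‖x‖ ^ 2 ≤ ‖φ‖ * ‖x‖ := by
        rw [RightCStarModule.norm_sq_eq (A := A), hinner_x x]
        calc ‖φ (e.op x)‖ ≤ ‖φ‖ * ‖e.op x‖ := φ.le_opNorm _
          _ ≤ ‖φ‖ * (‖e‖ * ‖x‖) := by
              gcongr
              exact Adj.norm_op_apply_le e x
          _ ≤ ‖φ‖ * (1 * ‖x‖) := by gcongr
          _ = ‖φ‖ * ‖x‖ := by ring
      nlinarith
  refine ⟨x, hx_norm, fun ξ hξ => ?_⟩
  have h1 : φ ξ - ⟪x, ξ⟫ = φ (d.op ξ) := by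
    rw [hinner_x ξ, ← map_sub]
    congr 1
    have h2 : e.op ξ + d.op ξ = ξ := by
      have h3 := congrArg (fun T : Adj A E => T.op ξ) hde
      simpa using h3
    exact (eq_sub_of_add_eq' h2).symm
  have hω : ‖d.op ξ‖ ^ 2 ≤ t / 4 := by
    set ω := d.op ξ with hω_def
    set q : A := ⟪ω, ω⟫ with hq_def
    have hq_sa : IsSelfAdjoint q := RightCStarModule.isSelfAdjoint_inner_self
    have hdkd_apply : (d * kOp A F * d).op ω = ∑ η ∈ F, (d.op η) <• ⟪d.op η, ω⟫ := by
      have h2 : (d * kOp A F * d).op ω = d.op ((kOp A F).op (d.op ω)) := rfl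
      rw [h2, kOp_apply, map_sum]
      refine Finset.sum_congr rfl fun η _ => ?_
      rw [op_map_op_smul d, ← isSelfAdjoint_op_inner hd_sa]
    have hq2 : q * q ≤ ⟪ω, (d * kOp A F * d).op ω⟫ := by
      rw [hdkd_apply, RightCStarModule.inner_sum_right]
      have hterm : ∀ η ∈ F, (0 : A) ≤ ⟪ω, (d.op η) <• ⟪d.op η, ω⟫⟫ := by
        intro η _
        rw [RightCStarModule.inner_op_smul_right, ← RightCStarModule.star_inner (d.op η)]
        exact star_mul_self_nonneg _
      have hsingle : ⟪ω, (d.op ξ) <• ⟪d.op ξ, ω⟫⟫ = q * q := by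
        rw [RightCStarModule.inner_op_smul_right]
      calc q * q = ⟪ω, (d.op ξ) <• ⟪d.op ξ, ω⟫⟫ := hsingle.symm
        _ ≤ ∑ η ∈ F, ⟪ω, (d.op η) <• ⟪d.op η, ω⟫⟫ :=
            Finset.single_le_sum hterm hξ
    have hqq : ‖q‖ ^ 2 ≤ (t / 4) * ‖q‖ := by
      have hqq0 : (0 : A) ≤ q * q := by
        have hst : (0 : A) ≤ star q * q := star_mul_self_nonneg q
        rwa [hq_sa.star_eq] at hst
      calc ‖q‖ ^ 2 = ‖star q * q‖ := by rw [CStarRing.norm_star_mul_self, sq]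
        _ = ‖q * q‖ := by rw [hq_sa.star_eq]
        _ ≤ ‖⟪ω, (d * kOp A F * d).op ω⟫‖ :=
            CStarAlgebra.norm_le_norm_of_nonneg_of_le hqq0 hq2
        _ ≤ ‖ω‖ * ‖(d * kOp A F * d).op ω‖ := RightCStarModule.norm_inner_le E
        _ ≤ ‖ω‖ * (‖d * kOp A F * d‖ * ‖ω‖) := by
            gcongr
            exact Adj.norm_op_apply_le _ _
        _ ≤ ‖ω‖ * ((t / 4) * ‖ω‖) := by gcongr
        _ = (t / 4) * ‖ω‖ ^ 2 := by ring
        _ = (t / 4) * ‖q‖ := by rw [RightCStarModule.norm_sq_eq]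
    have hq_le : ‖q‖ ≤ t / 4 := by
      rcases eq_or_lt_of_le (norm_nonneg q) with h | h
      · rw [← h]; positivity
      · nlinarith
    rw [RightCStarModule.norm_sq_eq (A := A)]
    exact hq_le
  have hω' : ‖d.op ξ‖ ≤ Real.sqrt t / 2 := by
    have h4 : Real.sqrt (t / 4) = Real.sqrt t / 2 := by
      rw [Real.sqrt_div ht.le 4, show Real.sqrt 4 = 2 by
        rw [show (4:ℝ) = 2 ^ 2 by norm_num, Real.sqrt_sq (by norm_num : (0:ℝ) ≤ 2)]]
    calc ‖d.op ξ‖ = Real.sqrt (‖d.op ξ‖ ^ 2) := (Real.sqrt_sq (norm_nonneg _)).symm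
      _ ≤ Real.sqrt (t / 4) := Real.sqrt_le_sqrt hω
      _ = Real.sqrt t / 2 := h4
  rw [h1]
  calc ‖φ (d.op ξ)‖ ≤ ‖φ‖ * ‖d.op ξ‖ := φ.le_opNorm _
    _ ≤ ‖φ‖ * (Real.sqrt t / 2) := by gcongr

end Main

end Stmt18

/-- Approximate self-duality of Hilbert `A`-modules: for any bounded module map
`φ : H → A`, any finite `F ⊆ H` and `ε > 0` there is `x ∈ H` with `‖x‖ ≤ ‖φ‖` and
`‖φ(ξ) - ⟪x, ξ⟫‖ < ε` for all `ξ ∈ F`; moreover, if `H` is countably generated, there is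
a sequence `xₙ ∈ H` with `‖xₙ‖ ≤ ‖φ‖` and `‖φ(ξ) - ⟪xₙ, ξ⟫‖ → 0` for every `ξ ∈ H`. -/
theorem stmt18 {A E : Type*} [NonUnitalCStarAlgebra A] [PartialOrder A] [StarOrderedRing A]
    [NormedAddCommGroup E] [NormedSpace ℂ E] [SMul Aᵐᵒᵖ E] [RightCStarModule A E]
    [CompleteSpace E]
    (φ : E →L[ℂ] A) (hφ : ∀ (x : E) (a : A), φ (x <• a) = φ x * a) :
    (∀ (F : Finset E), ∀ ε > (0 : ℝ), ∃ x : E, ‖x‖ ≤ ‖φ‖ ∧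
      ∀ ξ ∈ F, ‖φ ξ - (inner A x ξ : A)‖ < ε) ∧
    ((∃ G : Set E, G.Countable ∧
        Dense ((Submodule.span ℂ {z : E | ∃ g ∈ G, ∃ a : A, z = g <• a} : Submodule ℂ E)
          : Set E)) →
      ∃ x : ℕ → E, (∀ n, ‖x n‖ ≤ ‖φ‖) ∧
        ∀ ξ : E, Tendsto (fun n => ‖φ ξ - (inner A (x n) ξ : A)‖) atTop (𝓝 0)) := by
  classical
  have P1 : ∀ (F : Finset E), ∀ ε > (0 : ℝ), ∃ x : E, ‖x‖ ≤ ‖φ‖ ∧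
      ∀ ξ ∈ F, ‖φ ξ - (inner A x ξ : A)‖ < ε := by
    intro F ε hε
    rcases subsingleton_or_nontrivial E with hE | hE
    · refine ⟨0, by simpa using norm_nonneg φ, fun ξ _ => ?_⟩
      have h0 : ξ = (0 : E) := Subsingleton.elim _ _
      rw [h0]
      simpa using hε
    · set t : ℝ := (ε / (‖φ‖ + 1)) ^ 2 with ht_def
      have ht : 0 < t := by positivity
      obtain ⟨x, hx1, hx2⟩ := Stmt18.main_approx φ hφ F ht
      refine ⟨x, hx1, fun ξ hξ => lt_of_le_of_lt (hx2 ξ hξ) ?_⟩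
      have hsq : Real.sqrt t = ε / (‖φ‖ + 1) := by
        rw [ht_def, Real.sqrt_sq (by positivity)]
      rw [hsq]
      have hu0 : 0 < ε / (‖φ‖ + 1) := by positivity
      have heq : (ε / (‖φ‖ + 1)) * (‖φ‖ + 1) = ε := div_mul_cancel₀ ε (by positivity)
      nlinarith [norm_nonneg φ, mul_nonneg hu0.le (norm_nonneg φ)]
  refine ⟨P1, ?_⟩
  rintro ⟨G, hGc, hGd⟩
  rcases subsingleton_or_nontrivial E with hE | hE
  · refine ⟨fun _ => 0, fun n => by simpa using norm_nonneg φ, fun ξ => ?_⟩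
    have h0 : ξ = (0 : E) := Subsingleton.elim _ _
    rw [h0]
    simpa using (tendsto_const_nhds : Tendsto (fun _ : ℕ => (0 : ℝ)) atTop (𝓝 0))
  · have hG'c : (insert (0:E) G).Countable := hGc.insert 0
    obtain ⟨g, hg⟩ := hG'c.exists_eq_range ⟨0, Set.mem_insert _ _⟩
    have hP : ∀ n : ℕ, ∃ x : E, ‖x‖ ≤ ‖φ‖ ∧
        ∀ ξ ∈ Finset.image g (Finset.range (n+1)),
          ‖φ ξ - (inner A x ξ : A)‖ < 1/(n+1) :=
      fun n => P1 _ _ (by positivity)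
    choose x hx1 hx2 using hP
    refine ⟨x, hx1, ?_⟩
    have hA : ∀ i : ℕ, Tendsto (fun n => ‖φ (g i) - (inner A (x n) (g i) : A)‖) atTop (𝓝 0) := by
      intro i
      refine squeeze_zero' (Filter.Eventually.of_forall fun n => norm_nonneg _) ?_
        tendsto_one_div_add_atTop_nhds_zero_nat
      refine Filter.eventually_atTop.mpr ⟨i, fun n hn => ?_⟩
      refine le_of_lt (hx2 n (g i) ?_)
      exact Finset.mem_image.mpr ⟨i, Finset.mem_range.mpr (Nat.lt_succ_of_le hn), rfl⟩
    have hB : ∀ ξ ∈ Submodule.span ℂ {z : E | ∃ gg ∈ G, ∃ a : A, z = gg <• a},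
        Tendsto (fun n => ‖φ ξ - (inner A (x n) ξ : A)‖) atTop (𝓝 0) := by
      intro ξ hξ
      induction hξ using Submodule.span_induction with
      | mem z hz =>
        obtain ⟨gg, hgg, a, rfl⟩ := hz
        have hrange : gg ∈ Set.range g := by rw [← hg]; exact Set.mem_insert_of_mem _ hgg
        obtain ⟨i, rfl⟩ := hrange
        refine squeeze_zero (f := fun n => ‖φ (g i <• a) - (inner A (x n) (g i <• a) : A)‖)
          (g := fun n => ‖φ (g i) - (inner A (x n) (g i) : A)‖ * ‖a‖)
          (fun n => norm_nonneg _) (fun n => ?_) ?_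
        · have heq : φ (g i <• a) - (inner A (x n) (g i <• a) : A)
              = (φ (g i) - inner A (x n) (g i)) * a := by
            rw [hφ, RightCStarModule.inner_op_smul_right, sub_mul]
          rw [heq]
          exact norm_mul_le _ _
        · simpa using (hA i).mul_const ‖a‖
      | zero =>
        simpa using (tendsto_const_nhds : Tendsto (fun _ : ℕ => (0 : ℝ)) atTop (𝓝 0))
      | add y z hy hz hty htz =>
        refine squeeze_zero (f := fun n => ‖φ (y + z) - (inner A (x n) (y + z) : A)‖)
          (g := fun n => ‖φ y - (inner A (x n) y : A)‖ + ‖φ z - (inner A (x n) z : A)‖)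
          (fun n => norm_nonneg _) (fun n => ?_) ?_
        · have heq : φ (y + z) - (inner A (x n) (y + z) : A)
              = (φ y - inner A (x n) y) + (φ z - inner A (x n) z) := by
            rw [map_add, RightCStarModule.inner_add_right]; abel
          rw [heq]
          exact norm_add_le _ _
        · simpa using hty.add htz
      | smul c y hy hty =>
        refine squeeze_zero (f := fun n => ‖φ (c • y) - (inner A (x n) (c • y) : A)‖)
          (g := fun n => ‖c‖ * ‖φ y - (inner A (x n) y : A)‖)
          (fun n => norm_nonneg _) (fun n => le_of_eq ?_) ?_
        · have heq : φ (c • y) - (inner A (x n) (c • y) : A)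
              = c • (φ y - inner A (x n) y) := by
            rw [map_smul, RightCStarModule.inner_smul_right_complex, smul_sub]
          rw [heq, norm_smul]
        · simpa using hty.const_mul ‖c‖
    intro ξ
    rw [Metric.tendsto_atTop]
    intro ε hε
    have hr : 0 < ε / (2 * (2 * ‖φ‖ + 1)) := by positivity
    obtain ⟨ζ, hζmem, hζ⟩ := Metric.mem_closure_iff.mp (hGd ξ) _ hr
    have hζt := hB ζ hζmem
    rw [Metric.tendsto_atTop] at hζt
    obtain ⟨N, hN⟩ := hζt (ε/2) (by positivity)
    refine ⟨N, fun n hn => ?_⟩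
    have hbound : ‖φ ζ - (inner A (x n) ζ : A)‖ < ε/2 := by
      have h := hN n hn
      rwa [Real.dist_eq, sub_zero, abs_of_nonneg (norm_nonneg _)] at h
    rw [Real.dist_eq, sub_zero, abs_of_nonneg (norm_nonneg _)]
    have hsplit : φ ξ - (inner A (x n) ξ : A)
        = (φ (ξ - ζ) - inner A (x n) (ξ - ζ)) + (φ ζ - inner A (x n) ζ) := by
      rw [map_sub, RightCStarModule.inner_sub_right]; abel
    have hdist : ‖ξ - ζ‖ < ε / (2 * (2 * ‖φ‖ + 1)) := by rwa [← dist_eq_norm]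
    have h1 : ‖φ ξ - (inner A (x n) ξ : A)‖
        ≤ 2 * ‖φ‖ * ‖ξ - ζ‖ + ‖φ ζ - (inner A (x n) ζ : A)‖ := by
      calc ‖φ ξ - (inner A (x n) ξ : A)‖
          ≤ ‖φ (ξ - ζ) - (inner A (x n) (ξ - ζ) : A)‖ + ‖φ ζ - (inner A (x n) ζ : A)‖ := by
            rw [hsplit]; exact norm_add_le _ _
        _ ≤ (‖φ (ξ - ζ)‖ + ‖(inner A (x n) (ξ - ζ) : A)‖) + ‖φ ζ - (inner A (x n) ζ : A)‖ := by
            gcongr ?_ + _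
            exact norm_sub_le _ _
        _ ≤ (‖φ‖ * ‖ξ - ζ‖ + ‖x n‖ * ‖ξ - ζ‖) + ‖φ ζ - (inner A (x n) ζ : A)‖ := by
            gcongr ?_ + ?_ + _
            · exact φ.le_opNorm _
            · exact RightCStarModule.norm_inner_le E
        _ ≤ (‖φ‖ * ‖ξ - ζ‖ + ‖φ‖ * ‖ξ - ζ‖) + ‖φ ζ - (inner A (x n) ζ : A)‖ := by
            gcongr
            exact hx1 n
        _ = 2 * ‖φ‖ * ‖ξ - ζ‖ + ‖φ ζ - (inner A (x n) ζ : A)‖ := by ring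
    have h2 : 2 * ‖φ‖ * ‖ξ - ζ‖ ≤ 2 * ‖φ‖ * (ε / (2 * (2 * ‖φ‖ + 1))) :=
      mul_le_mul_of_nonneg_left hdist.le (by positivity)
    have h3 : 2 * ‖φ‖ * (ε / (2 * (2 * ‖φ‖ + 1))) ≤ ε / 2 := by
      have heq : (ε / (2 * (2 * ‖φ‖ + 1))) * (2 * (2 * ‖φ‖ + 1)) = ε :=
        div_mul_cancel₀ ε (by positivity)
      nlinarith [mul_nonneg hr.le (norm_nonneg φ), norm_nonneg φ, hr.le]
    linarith

end
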